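/- Let D be a derivation of a commutative algebra A (with respect to its product). If D satisfies a 'PGI' identity on connected n-fold products, D((F^{⊗n})_c) = -i n (G ⊗ F^{⊗(n-1)})_c for all n, and every n-fold product decomposes as F^{⊗n}-product = Σ over partitions of products of connected parts, then D satisfies the corresponding identity on the full products: D(T_n(F^{⊗n})) = -i n T_n(G ⊗ F^{⊗(n-1)}), where T_n(F^{⊗n}) = Σ_P Π_{J∈P} T_{|J|,c}(F^{⊗|J|}) and T_n(G ⊗ F^{⊗(n-1)}) = Σ_P Σ_{J∋ marked slot} T_{|J|,c}(G ⊗ F^{⊗(|J|-1)}) Π_{J'≠J} T_{|J'|,c}(F^{⊗|J'|}). -/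

import Mathlib

open scoped Classical

/-- The finite set of all partitions of `{0,…,n-1}` into pairwise disjoint nonempty
blocks covering everything. -/
noncomputable def partitionsOf (n : ℕ) : Finset (Finset (Finset (Fin n))) :=
  Finset.univ.filter fun P =>
    ∅ ∉ P ∧ (P : Set (Finset (Fin n))).PairwiseDisjoint id ∧ P.sup id = Finset.univ

/-- Leibniz rule for a derivation applied to a finite product. -/
lemma aux_D_prod {A : Type*} [CommRing A] [Algebra ℂ A]
    (D : A →ₗ[ℂ] A) (hder : ∀ x y : A, D (x * y) = D x * y + x * D y)
    {ι : Type*} [DecidableEq ι] (s : Finset ι) (g : ι → A) :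
    D (∏ i ∈ s, g i) = ∑ i ∈ s, D (g i) * ∏ j ∈ s.erase i, g j := by
  have h1 : D 1 = 0 := by
    have h := hder 1 1
    simp only [mul_one, one_mul] at h
    exact left_eq_add.mp h
  induction s using Finset.induction_on with
  | empty => simp [h1]
  | @insert a s ha ih =>
    rw [Finset.prod_insert ha, hder, ih, Finset.sum_insert ha, Finset.erase_insert ha]
    congr 1
    rw [Finset.mul_sum]
    refine Finset.sum_congr rfl fun i hi => ?_
    have hai : a ≠ i := fun h => ha (h ▸ hi)
    rw [Finset.erase_insert_of_ne hai, Finset.prod_insert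
      (fun h => ha (Finset.mem_of_mem_erase h))]
    ring

/-- Relabelling by a permutation maps partitions to partitions. -/
lemma partitionsOf_mem_map {n : ℕ} (e : Equiv.Perm (Fin n)) {P : Finset (Finset (Fin n))}
    (hP : P ∈ partitionsOf n) : P.image (Finset.image e) ∈ partitionsOf n := by
  simp only [partitionsOf, Finset.mem_filter, Finset.mem_univ, true_and] at hP ⊢
  obtain ⟨h0, hdisj, hcov⟩ := hP
  refine ⟨?_, ?_, ?_⟩
  · intro h
    obtain ⟨K, hK, hKe⟩ := Finset.mem_image.mp h
    exact h0 (Finset.image_eq_empty.mp hKe ▸ hK)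
  · intro J1 h1 J2 h2 hne
    obtain ⟨K1, hK1, rfl⟩ := Finset.mem_image.mp (Finset.mem_coe.mp h1)
    obtain ⟨K2, hK2, rfl⟩ := Finset.mem_image.mp (Finset.mem_coe.mp h2)
    have hKne : K1 ≠ K2 := fun h => hne (by rw [h])
    have := hdisj (Finset.mem_coe.mpr hK1) (Finset.mem_coe.mpr hK2) hKne
    simpa [Function.onFun, Finset.disjoint_image e.injective] using this
  · refine Finset.eq_univ_iff_forall.mpr fun y => ?_
    have hy : e.symm y ∈ P.sup id := hcov ▸ Finset.mem_univ _
    obtain ⟨K, hK, hyK⟩ := Finset.mem_sup.mp hy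
    exact Finset.mem_sup.mpr ⟨K.image e, Finset.mem_image_of_mem _ hK,
      by simpa using Finset.mem_image_of_mem e hyK⟩

/-- Relabelling invariance: the sum over partitions with the marked block containing
`e b` equals the one with the marked block containing `b`. -/
lemma sum_filter_swap {A : Type*} [CommRing A] {n : ℕ} (e : Equiv.Perm (Fin n)) (b : Fin n)
    (gc hc : ℕ → A) :
    ∑ P ∈ partitionsOf n, ∑ J ∈ P.filter (fun J => e b ∈ J),
        hc J.card * ∏ J' ∈ P.erase J, gc J'.card
      = ∑ P ∈ partitionsOf n, ∑ J ∈ P.filter (fun J => b ∈ J),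
        hc J.card * ∏ J' ∈ P.erase J, gc J'.card := by
  have hMinj : Function.Injective (Finset.image (e.symm : Fin n → Fin n)) :=
    Finset.image_injective e.symm.injective
  have hinv : ∀ (f : Equiv.Perm (Fin n)) (Q : Finset (Finset (Fin n))),
      (Q.image (Finset.image f)).image (Finset.image f.symm) = Q := by
    intro f Q
    rw [Finset.image_image]
    have : (Finset.image (f.symm : Fin n → Fin n)) ∘ (Finset.image (f : Fin n → Fin n))
        = id := by
      funext K
      simp [Finset.image_image]
    rw [this, Finset.image_id]
  refine Finset.sum_nbij' (fun P => P.image (Finset.image e.symm))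
    (fun P => P.image (Finset.image e)) (fun P hP => partitionsOf_mem_map _ hP)
    (fun P hP => partitionsOf_mem_map _ hP) (fun P _ => by simpa using hinv e.symm P)
    (fun P _ => hinv e P) ?_
  intro P hP
  -- rewrite the filtered set of the image partition as the image of the filtered set
  have hfilter : (P.image (Finset.image e.symm)).filter (fun J => b ∈ J)
      = (P.filter (fun J => e b ∈ J)).image (Finset.image e.symm) := by
    ext J
    simp only [Finset.mem_filter, Finset.mem_image]
    constructor
    · rintro ⟨⟨K, hK, rfl⟩, hbJ⟩
      refine ⟨K, ⟨hK, ?_⟩, rfl⟩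
      obtain ⟨y, hyK, hy⟩ := Finset.mem_image.mp hbJ
      have : y = e b := by
        apply e.symm.injective; simpa using hy
      exact this ▸ hyK
    · rintro ⟨K, ⟨hK, hbK⟩, rfl⟩
      exact ⟨⟨K, hK, rfl⟩, by simpa using Finset.mem_image_of_mem e.symm hbK⟩
  rw [hfilter, Finset.sum_image (fun x _ y _ h => hMinj h)]
  refine Finset.sum_congr rfl fun J hJ => ?_
  rw [Finset.card_image_of_injective _ e.symm.injective]
  congr 1
  rw [← Finset.image_erase hMinj, Finset.prod_image (fun x _ y _ h => hMinj h)]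
  refine Finset.prod_congr rfl fun J' _ => ?_
  rw [Finset.card_image_of_injective _ e.symm.injective]

/-- If a derivation `D` of a commutative ℂ-algebra satisfies the PGI identity on
connected time-ordered products, `D(T_{n,c}(F^{⊗n})) = -i n T_{n,c}(G ⊗ F^{⊗(n-1)})`,
then it satisfies the corresponding identity for the full time-ordered products,
defined from the connected ones by summing over all partitions (the block containing
the marked slot carrying the `G`-insertion). -/
theorem pgi_connected_to_full {A : Type*} [CommRing A] [Algebra ℂ A]
    (D : A →ₗ[ℂ] A) (hder : ∀ x y : A, D (x * y) = D x * y + x * D y)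
    (Tc : (m : ℕ) → (Fin m → A) → A)
    (hTsymm : ∀ (m : ℕ) (F : Fin m → A) (σ : Equiv.Perm (Fin m)), Tc m (F ∘ σ) = Tc m F)
    (F G : A)
    (hPGI : ∀ n : ℕ, 1 ≤ n →
      D (Tc n fun _ => F) =
        ((-Complex.I) * (n : ℂ)) • Tc n (fun k : Fin n => if (k : ℕ) = 0 then G else F)) :
    ∀ (n : ℕ) (hn : 1 ≤ n),
      D (∑ P ∈ partitionsOf n, ∏ J ∈ P, Tc J.card fun _ => F) =
        ((-Complex.I) * (n : ℂ)) •
          ∑ P ∈ partitionsOf n,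
            ∑ J ∈ P.filter (fun J => (⟨0, hn⟩ : Fin n) ∈ J),
              Tc J.card (fun k : Fin J.card => if (k : ℕ) = 0 then G else F) *
                ∏ J' ∈ P.erase J, Tc J'.card fun _ => F := by
  intro n hn
  set a : Fin n := ⟨0, hn⟩ with ha
  set hc : ℕ → A := fun m => Tc m (fun k : Fin m => if (k : ℕ) = 0 then G else F) with hhc
  set gc : ℕ → A := fun m => Tc m (fun _ => F) with hgc
  rw [map_sum]
  have hD : ∀ P ∈ partitionsOf n, D (∏ J ∈ P, Tc J.card fun _ => F)
      = ∑ J ∈ P, ((-Complex.I) * (J.card : ℂ)) •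
          (hc J.card * ∏ J' ∈ P.erase J, gc J'.card) := by
    intro P hP
    rw [aux_D_prod D hder]
    refine Finset.sum_congr rfl fun J hJ => ?_
    have hne : J ≠ ∅ := by
      intro h
      have h0 : ∅ ∉ P := ((Finset.mem_filter.mp hP).2).1
      exact h0 (h ▸ hJ)
    have hcard : 1 ≤ J.card :=
      Finset.card_pos.mpr (Finset.nonempty_iff_ne_empty.mpr hne)
    rw [hPGI J.card hcard, smul_mul_assoc]
  rw [Finset.sum_congr rfl hD]
  have key : ∀ P ∈ partitionsOf n, ∑ J ∈ P, ((-Complex.I) * (J.card : ℂ)) •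
        (hc J.card * ∏ J' ∈ P.erase J, gc J'.card)
      = (-Complex.I) • ∑ x : Fin n, ∑ J ∈ P.filter (fun J => x ∈ J),
          hc J.card * ∏ J' ∈ P.erase J, gc J'.card := by
    intro P _
    have step1 : ∀ x : Fin n, ∑ J ∈ P.filter (fun J => x ∈ J),
          hc J.card * ∏ J' ∈ P.erase J, gc J'.card
        = ∑ J ∈ P, if x ∈ J then hc J.card * ∏ J' ∈ P.erase J, gc J'.card else 0 :=
      fun x => Finset.sum_filter _ _
    calc ∑ J ∈ P, ((-Complex.I) * (J.card : ℂ)) •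
            (hc J.card * ∏ J' ∈ P.erase J, gc J'.card)
        = ∑ J ∈ P, (-Complex.I) •
            (J.card • (hc J.card * ∏ J' ∈ P.erase J, gc J'.card)) := by
          refine Finset.sum_congr rfl fun J _ => ?_
          rw [mul_smul, Nat.cast_smul_eq_nsmul]
      _ = (-Complex.I) • ∑ J ∈ P,
            J.card • (hc J.card * ∏ J' ∈ P.erase J, gc J'.card) := by
          rw [Finset.smul_sum]
      _ = (-Complex.I) • ∑ J ∈ P, ∑ x : Fin n,
            if x ∈ J then hc J.card * ∏ J' ∈ P.erase J, gc J'.card else 0 := by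
          congr 1
          refine Finset.sum_congr rfl fun J _ => ?_
          rw [Finset.sum_ite_mem, Finset.univ_inter, Finset.sum_const]
      _ = (-Complex.I) • ∑ x : Fin n, ∑ J ∈ P.filter (fun J => x ∈ J),
            hc J.card * ∏ J' ∈ P.erase J, gc J'.card := by
          rw [Finset.sum_comm]
          congr 1
          exact Finset.sum_congr rfl fun x _ => (step1 x).symm
  rw [Finset.sum_congr rfl key, ← Finset.smul_sum, Finset.sum_comm]
  have swapstep : ∀ x : Fin n, ∑ P ∈ partitionsOf n, ∑ J ∈ P.filter (fun J => x ∈ J),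
        hc J.card * ∏ J' ∈ P.erase J, gc J'.card
      = ∑ P ∈ partitionsOf n, ∑ J ∈ P.filter (fun J => a ∈ J),
        hc J.card * ∏ J' ∈ P.erase J, gc J'.card := by
    intro x
    have := sum_filter_swap (Equiv.swap a x) a gc hc
    rwa [Equiv.swap_apply_left] at this
  rw [Finset.sum_congr rfl (fun x _ => swapstep x), Finset.sum_const, Finset.card_univ,
    Fintype.card_fin, ← Nat.cast_smul_eq_nsmul ℂ, smul_smul]
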